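/- Every finitely generated simple module over a finitely generated commutative ring has finite cardinality. -/

import Mathlib

instance : IsJacobsonRing ℤ := by
  rw [isJacobsonRing_iff_prime_eq]
  intro P hP
  by_cases hbot : P = ⊥
  · subst hbot
    refine le_antisymm (fun x hx => ?_) Ideal.le_jacobson
    rw [Ideal.mem_jacobson_bot] at hx
    have h1 := Int.isUnit_iff.mp (hx 1)
    have h2 := Int.isUnit_iff.mp (hx (-1))
    simp only [Ideal.mem_bot]
    omega
  · haveI : P.IsPrime := hP
    haveI := IsPrime.to_maximal_ideal hbot
    exact Ideal.jacobson_eq_self_of_isMaximal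

/-- A field that is finitely generated as a `ℤ`-module is finite. -/
lemma finite_of_field_moduleFinite (K : Type*) [Field K] [Module.Finite ℤ K] : Finite K := by
  have hint : Algebra.IsIntegral ℤ K := Algebra.IsIntegral.of_finite ℤ K
  cases CharP.char_is_prime_or_zero K (ringChar K) with
  | inl hp =>
    haveI : Fact (Nat.Prime (ringChar K)) := ⟨hp⟩
    haveI : CharP K (ringChar K) := ringChar.charP K
    letI : Algebra (ZMod (ringChar K)) K := ZMod.algebra K (ringChar K)
    haveI : Module.Finite (ZMod (ringChar K)) K :=
      Module.Finite.of_restrictScalars_finite ℤ (ZMod (ringChar K)) K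
    exact Module.finite_of_finite (ZMod (ringChar K))
  | inr h0 =>
    exfalso
    haveI : CharP K 0 := h0 ▸ ringChar.charP K
    haveI : CharZero K := CharP.charP_to_charZero K
    have hinj : Function.Injective (algebraMap ℤ K) := by
      intro a b hab
      have : (a : K) = (b : K) := by
        simpa [algebraMap_int_eq, eq_intCast] using hab
      exact_mod_cast this
    exact Int.not_isField (isField_of_isIntegral_of_isField hinj (Field.toIsField K))

theorem finite_of_simpleModule_finiteType
    (A : Type*) [CommRing A] [Algebra.FiniteType ℤ A]
    (M : Type*) [AddCommGroup M] [Module A M] [IsSimpleModule A M]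
    [Module.Finite A M] :
    Finite M := by
  obtain ⟨I, hI, ⟨e⟩⟩ := isSimpleModule_iff_quot_maximal.mp ‹IsSimpleModule A M›
  haveI : I.IsMaximal := hI
  letI : Field (A ⧸ I) := Ideal.Quotient.field I
  haveI : Algebra.FiniteType ℤ (A ⧸ I) :=
    Algebra.FiniteType.trans ‹Algebra.FiniteType ℤ A›
      (Algebra.FiniteType.of_surjective (Algebra.ofId A (A ⧸ I))
        (fun x => by obtain ⟨a, rfl⟩ := Ideal.Quotient.mk_surjective x; exact ⟨a, rfl⟩))
  haveI : Module.Finite ℤ (A ⧸ I) := finite_of_finite_type_of_isJacobsonRing ℤ (A ⧸ I)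
  haveI : Finite (A ⧸ I) := finite_of_field_moduleFinite (A ⧸ I)
  exact e.toEquiv.finite_iff.mpr ‹_›
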